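/- arXiv:1502.05334 — 2 statements merged into one kernel-verified Lean document; each statement's English description precedes it below -/
import Mathlib

section
/- If T is a tree with at least four vertices and no vertex of degree two, then T can be reduced to the star K_{1,3} by a sequence of steps, each of which either removes the two leaf children of a vertex of degree three or removes one leaf child of a vertex of degree greater than three. -/
/-- A finite graph on a subset of `ℕ`, allowing vertex-set changes under reductions. -/
structure FinGraph where
  verts : Finset ℕ
  Adj : ℕ → ℕ → Prop
  symm : ∀ u v, Adj u v → Adj v u
  loopless : ∀ u, ¬ Adj u u
  support : ∀ u v, Adj u v → u ∈ verts ∧ v ∈ verts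

namespace FinGraph

def neighborSet (G : FinGraph) (v : ℕ) : Set ℕ := {u | G.Adj v u}

/-- The degree of a vertex. -/
noncomputable def degree (G : FinGraph) (v : ℕ) : ℕ := (G.neighborSet v).ncard

/-- Reachability by a walk staying inside the set `S`. -/
def ReachableWithin (G : FinGraph) (S : Set ℕ) (u v : ℕ) : Prop :=
  Relation.ReflTransGen (fun a b => G.Adj a b ∧ a ∈ S ∧ b ∈ S) u v

/-- The subgraph induced on `S` is connected. -/
def ConnectedOn (G : FinGraph) (S : Set ℕ) : Prop :=
  ∀ u ∈ S, ∀ v ∈ S, G.ReachableWithin S u v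

def Connected (G : FinGraph) : Prop := G.ConnectedOn ↑G.verts

/-- 3-vertex-connectivity: more than three vertices, and connected after deleting
any two vertices. -/
def ThreeConnected (G : FinGraph) : Prop :=
  3 < G.verts.card ∧ ∀ x y : ℕ, G.ConnectedOn (↑G.verts \ {x, y})

/-- Graph isomorphism. -/
def Iso (G H : FinGraph) : Prop :=
  ∃ f : ℕ → ℕ, Set.BijOn f ↑G.verts ↑H.verts ∧
    ∀ u ∈ G.verts, ∀ v ∈ G.verts, (G.Adj u v ↔ H.Adj (f u) (f v))

/-- The configuration for a D3a reduction: a triangle `p q r` of degree-three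
vertices whose outside neighbors `p' q' r'` are three distinct vertices. -/
def D3aConfig (G : FinGraph) (p q r p' q' r' : ℕ) : Prop :=
  G.degree p = 3 ∧ G.degree q = 3 ∧ G.degree r = 3 ∧
  G.Adj p q ∧ G.Adj q r ∧ G.Adj p r ∧
  G.Adj p p' ∧ G.Adj q q' ∧ G.Adj r r' ∧
  p' ∉ ({p, q, r} : Set ℕ) ∧ q' ∉ ({p, q, r} : Set ℕ) ∧ r' ∉ ({p, q, r} : Set ℕ) ∧
  p' ≠ q' ∧ p' ≠ r' ∧ q' ≠ r'

/-- A D3a reduction from `G` to `H`: collapse such a triangle to a new vertex `t`. -/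
def D3a (G H : FinGraph) : Prop :=
  ∃ p q r p' q' r' t, G.D3aConfig p q r p' q' r' ∧ t ∉ G.verts ∧
    H.verts = (G.verts \ {p, q, r}) ∪ {t} ∧
    ∀ a b, H.Adj a b ↔
      (G.Adj a b ∧ a ∉ ({p, q, r} : Set ℕ) ∧ b ∉ ({p, q, r} : Set ℕ)) ∨
      (a = t ∧ b ∈ ({p', q', r'} : Set ℕ)) ∨
      (b = t ∧ a ∈ ({p', q', r'} : Set ℕ))

/-- The configuration for a D3b reduction: an induced path `p q r` of degree-three
vertices, all adjacent to a common apex `s`. -/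
def D3bConfig (G : FinGraph) (p q r s : ℕ) : Prop :=
  G.degree p = 3 ∧ G.degree q = 3 ∧ G.degree r = 3 ∧
  G.Adj p q ∧ G.Adj q r ∧ ¬ G.Adj p r ∧ p ≠ r ∧
  G.Adj s p ∧ G.Adj s q ∧ G.Adj s r

/-- A D3b reduction from `G` to `H`: delete the middle vertex `q` and add edge `pr`. -/
def D3b (G H : FinGraph) : Prop :=
  ∃ p q r s, G.D3bConfig p q r s ∧
    H.verts = G.verts \ {q} ∧
    ∀ a b, H.Adj a b ↔
      (G.Adj a b ∧ a ≠ q ∧ b ≠ q) ∨ (a = p ∧ b = r) ∨ (a = r ∧ b = p)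

/-- A single D3 reduction. -/
def D3Step (G H : FinGraph) : Prop := G.D3a H ∨ G.D3b H

/-- `G` is a complete graph on four vertices. -/
def IsK4 (G : FinGraph) : Prop :=
  G.verts.card = 4 ∧ ∀ u ∈ G.verts, ∀ v ∈ G.verts, u ≠ v → G.Adj u v

/-- A graph is D3-reducible if some sequence of D3 reductions takes it to `K₄`. -/
def D3Reducible (G : FinGraph) : Prop :=
  ∃ H, Relation.ReflTransGen D3Step G H ∧ H.IsK4

/-- No D3 reduction applies. -/
def Irreducible (G : FinGraph) : Prop := ¬ ∃ H, G.D3Step H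

/-- `H` is a minor of `G`, witnessed by connected, disjoint branch sets. -/
def HasMinor (G H : FinGraph) : Prop :=
  ∃ B : ℕ → Finset ℕ,
    (∀ v ∈ H.verts, (B v).Nonempty ∧ ↑(B v) ⊆ (↑G.verts : Set ℕ) ∧ G.ConnectedOn ↑(B v)) ∧
    (∀ u ∈ H.verts, ∀ v ∈ H.verts, u ≠ v → Disjoint (B u) (B v)) ∧
    (∀ u v, H.Adj u v → ∃ a ∈ B u, ∃ b ∈ B v, G.Adj a b)

def K5Graph : FinGraph where
  verts := Finset.range 5
  Adj a b := a ≠ b ∧ a < 5 ∧ b < 5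
  symm := fun _ _ h => ⟨Ne.symm h.1, h.2.2, h.2.1⟩
  loopless := fun _ h => h.1 rfl
  support := fun _ _ h => ⟨Finset.mem_range.2 h.2.1, Finset.mem_range.2 h.2.2⟩

def K33Graph : FinGraph where
  verts := Finset.range 6
  Adj a b := (a < 3 ∧ 3 ≤ b ∧ b < 6) ∨ (b < 3 ∧ 3 ≤ a ∧ a < 6)
  symm := fun _ _ h => h.elim Or.inr Or.inl
  loopless := by intro u h; rcases h with ⟨h1, h2, _⟩ | ⟨h1, h2, _⟩ <;> omega
  support := by
    intro u v h
    constructor <;> rw [Finset.mem_range] <;>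
      rcases h with ⟨h1, h2, h3⟩ | ⟨h1, h2, h3⟩ <;> omega

/-- Planarity, via Wagner's characterization: no `K₅` and no `K₃,₃` minor. -/
def Planar (G : FinGraph) : Prop := ¬ G.HasMinor K5Graph ∧ ¬ G.HasMinor K33Graph

/-- `T` is a tree: nonempty, connected, and every edge is a bridge (acyclicity). -/
def IsTreeGraph (T : FinGraph) : Prop :=
  T.verts.Nonempty ∧ T.Connected ∧
  ∀ u v, T.Adj u v → ¬ Relation.ReflTransGen
    (fun a b => T.Adj a b ∧ ¬(a = u ∧ b = v) ∧ ¬(a = v ∧ b = u)) u v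

def IsLeaf (T : FinGraph) (v : ℕ) : Prop := T.degree v = 1

/-- The edges of `G` not in the spanning tree `T` (the candidate cycle edges). -/
def cycleAdj (G T : FinGraph) (a b : ℕ) : Prop := G.Adj a b ∧ ¬ T.Adj a b

/-- `G` is a Halin graph with underlying tree `T`: `T` is a spanning tree with at
least four vertices and no degree-two vertex, the non-tree edges form a single
cycle passing exactly through the leaves of `T`, and `G` is planar (which forces
the cycle to traverse the leaves in the cyclic order of a planar embedding of `T`). -/
def IsHalinVia (G T : FinGraph) : Prop :=
  IsTreeGraph T ∧ T.verts = G.verts ∧ 4 ≤ T.verts.card ∧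
  (∀ v ∈ T.verts, T.degree v ≠ 2) ∧
  (∀ a b, T.Adj a b → G.Adj a b) ∧
  (∀ a b, cycleAdj G T a b → T.IsLeaf a ∧ T.IsLeaf b) ∧
  (∀ v ∈ G.verts, T.IsLeaf v → {u | cycleAdj G T v u}.ncard = 2) ∧
  (∀ u v, u ∈ G.verts → v ∈ G.verts → T.IsLeaf u → T.IsLeaf v →
    Relation.ReflTransGen (cycleAdj G T) u v) ∧
  G.Planar

def IsHalin (G : FinGraph) : Prop := ∃ T, IsHalinVia G T

/-- Treewidth at most `k`, via tree decompositions. -/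
def TreewidthLE (G : FinGraph) (k : ℕ) : Prop :=
  ∃ (ι : Type) (T : SimpleGraph ι) (bag : ι → Finset ℕ),
    T.IsTree ∧
    (∀ v ∈ G.verts, ∃ i, v ∈ bag i) ∧
    (∀ u v, G.Adj u v → ∃ i, u ∈ bag i ∧ v ∈ bag i) ∧
    (∀ (v : ℕ) (i j : ι) (p : T.Walk i j), p.IsPath → v ∈ bag i → v ∈ bag j →
      ∀ m ∈ p.support, v ∈ bag m) ∧
    (∀ i, (bag i).card ≤ k + 1)

/-- A face of a 3-connected planar graph, by Tutte's characterization: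
an induced cycle whose complement induces a connected subgraph. -/
def IsFaceCycle (G : FinGraph) (C : Finset ℕ) : Prop :=
  ↑C ⊆ (↑G.verts : Set ℕ) ∧ 3 ≤ C.card ∧
  (∀ v ∈ C, {u | u ∈ C ∧ G.Adj v u}.ncard = 2) ∧
  G.ConnectedOn ↑C ∧
  G.ConnectedOn (↑G.verts \ ↑C)

/-- `D` is the planar dual of the (3-connected planar) graph `G`: its vertices
correspond bijectively to the faces of `G`, with adjacency for faces sharing an edge. -/
def IsDualOf (D G : FinGraph) : Prop :=
  ∃ F : ℕ → Finset ℕ,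
    Set.InjOn F ↑D.verts ∧
    (∀ d ∈ D.verts, IsFaceCycle G (F d)) ∧
    (∀ C, IsFaceCycle G C → ∃ d ∈ D.verts, F d = C) ∧
    (∀ d e, D.Adj d e ↔ d ∈ D.verts ∧ e ∈ D.verts ∧ d ≠ e ∧
      ∃ u v, G.Adj u v ∧ u ∈ F d ∧ v ∈ F d ∧ u ∈ F e ∧ v ∈ F e)

/-- A wheel graph: a hub adjacent to all other vertices, which form a cycle. -/
def IsWheel (G : FinGraph) : Prop :=
  4 ≤ G.verts.card ∧ ∃ h ∈ G.verts,
    (∀ v ∈ G.verts, v ≠ h → G.Adj h v ∧ G.degree v = 3) ∧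
    G.ConnectedOn (↑G.verts \ {h})

/-- Glue the wheel `W` onto `G` along a shared triangular face `{a,b,c}`,
identifying the two faces vertexwise, producing `H`. -/
def GlueStep (G W H : FinGraph) : Prop :=
  ∃ a b c : ℕ, a ≠ b ∧ a ≠ c ∧ b ≠ c ∧
    IsFaceCycle G {a, b, c} ∧ IsFaceCycle W {a, b, c} ∧
    (↑G.verts ∩ ↑W.verts : Set ℕ) = {a, b, c} ∧
    H.verts = G.verts ∪ W.verts ∧
    (∀ u v, H.Adj u v ↔ G.Adj u v ∨ W.Adj u v)

/-- Graphs constructed by gluing wheels together along triangular faces.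
(Each gluing attaches one further wheel along a current triangular face; a glued
face stops being a face, so each face is used at most once, and no graph is
glued to itself.) -/
inductive GluedWheels : FinGraph → Prop
  | base (G : FinGraph) : IsWheel G → GluedWheels G
  | glue (G W H : FinGraph) : GluedWheels G → IsWheel W → GlueStep G W H → GluedWheels H

/-- Delete vertices in `S` from `G`. -/
def removeVerts (G : FinGraph) (S : Finset ℕ) : FinGraph where
  verts := G.verts \ S
  Adj a b := G.Adj a b ∧ a ∉ S ∧ b ∉ S
  symm := fun u v h => ⟨G.symm u v h.1, h.2.2, h.2.1⟩
  loopless := fun u h => G.loopless u h.1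
  support := fun u v h =>
    ⟨Finset.mem_sdiff.2 ⟨(G.support u v h.1).1, h.2.1⟩,
     Finset.mem_sdiff.2 ⟨(G.support u v h.1).2, h.2.2⟩⟩

/-- Delete the edge `uv` from `G`. -/
def deleteEdge (G : FinGraph) (u v : ℕ) : FinGraph where
  verts := G.verts
  Adj a b := G.Adj a b ∧ ¬((a = u ∧ b = v) ∨ (a = v ∧ b = u))
  symm := fun a b h => ⟨G.symm a b h.1, by tauto⟩
  loopless := fun a h => G.loopless a h.1
  support := fun a b h => G.support a b h.1

end FinGraph

namespace FinGraph
/-- One leaf-removal step: remove the two leaf children of a degree-three vertex,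
or remove one leaf child of a vertex of degree greater than three. -/
def LeafStep (T T' : FinGraph) : Prop :=
  (∃ v a b, T.degree v = 3 ∧ T.degree a = 1 ∧ T.degree b = 1 ∧ a ≠ b ∧
    T.Adj v a ∧ T.Adj v b ∧ T' = T.removeVerts {a, b}) ∨
  (∃ v a, 3 < T.degree v ∧ T.degree a = 1 ∧ T.Adj v a ∧ T' = T.removeVerts {a})

/-- `T` is a star `K_{1,3}`. -/
def IsStar13 (T : FinGraph) : Prop :=
  ∃ c x y z : ℕ, c ≠ x ∧ c ≠ y ∧ c ≠ z ∧ x ≠ y ∧ x ≠ z ∧ y ≠ z ∧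
    T.verts = {c, x, y, z} ∧
    ∀ a b, T.Adj a b ↔
      ((a = c ∧ b ∈ ({x, y, z} : Set ℕ)) ∨ (b = c ∧ a ∈ ({x, y, z} : Set ℕ)))
end FinGraph


namespace FinGraph

variable {T : FinGraph}

lemma nbhd_finite (T : FinGraph) (x : ℕ) : (T.neighborSet x).Finite :=
  T.verts.finite_toSet.subset (fun y hy => (T.support x y hy).2)

lemma mem_verts_of_adj {u v : ℕ} (h : T.Adj u v) : u ∈ T.verts := (T.support u v h).1

lemma ne_of_adj {u v : ℕ} (h : T.Adj u v) : u ≠ v := fun e => T.loopless v (e ▸ h)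

lemma exists_adj_of_connected (hc : T.Connected) (h2 : 2 ≤ T.verts.card)
    {x : ℕ} (hx : x ∈ T.verts) : ∃ y, T.Adj x y := by
  obtain ⟨y, hy, hyx⟩ := Finset.exists_mem_ne (s := T.verts) (by omega) x
  have hw := hc x hx y hy
  rcases Relation.ReflTransGen.cases_head hw with h | ⟨c, hstep, _⟩
  · exact absurd h.symm hyx
  · exact ⟨c, hstep.1⟩

lemma nbhd_eq_singleton {a v : ℕ} (hd : T.degree a = 1) (hav : T.Adj a v) :
    T.neighborSet a = {v} := by
  obtain ⟨x, hx⟩ := Set.ncard_eq_one.mp hd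
  have hv : v ∈ T.neighborSet a := hav
  rw [hx] at hv ⊢
  simp_all

lemma reach_of_chain {S : ℕ → ℕ → Prop} :
    ∀ (t : List ℕ) (d : ℕ), List.Chain S d t → ∀ x ∈ d :: t, Relation.ReflTransGen S d x := by
  intro t
  induction t with
  | nil => intro d _ x hx; simp at hx; subst hx; exact .refl
  | cons y t' ih =>
    intro d hch x hx
    unfold List.Chain at hch
    rw [List.chain_cons] at hch
    rcases List.mem_cons.mp hx with rfl | hx'
    · exact .refl
    · exact Relation.ReflTransGen.head hch.1 (ih y hch.2 x hx')

lemma chain_avoid {Adj : ℕ → ℕ → Prop} (c x : ℕ) :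
    ∀ (t : List ℕ) (d : ℕ), List.Chain Adj d t → c ∉ t →
      (d = c → ∀ y ∈ t.head?, y ≠ x) →
      List.Chain (fun u w => Adj u w ∧ ¬(u = c ∧ w = x) ∧ ¬(u = x ∧ w = c)) d t := by
  intro t
  induction t with
  | nil => intro d _ _ _; exact .nil
  | cons y t' ih =>
    intro d hch hc hh
    unfold List.Chain at hch ⊢
    rw [List.chain_cons] at hch ⊢
    have hyc : y ≠ c := fun e => hc (e ▸ List.mem_cons_self)
    refine ⟨⟨hch.1, fun h => hh h.1 y (by simp) h.2, fun h => hyc h.2⟩,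
      ih y hch.2 (fun h => hc (List.mem_cons_of_mem _ h)) (fun h => absurd h hyc)⟩

lemma no_chord (hT : T.IsTreeGraph) {c p₁ : ℕ} {t : List ℕ}
    (hch : List.Chain T.Adj c (p₁ :: t)) (hnd : (c :: p₁ :: t).Nodup)
    {x : ℕ} (hx : x ∈ t) : ¬ T.Adj c x := by
  intro hadj
  have hc : c ∉ p₁ :: t := (List.nodup_cons.mp hnd).1
  have hp₁ : p₁ ∉ t := (List.nodup_cons.mp (List.nodup_cons.mp hnd).2).1
  have hch' := chain_avoid c x (p₁ :: t) c hch hc ?_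
  · exact hT.2.2 c x hadj
      (reach_of_chain _ _ hch' x (List.mem_cons_of_mem _ (List.mem_cons_of_mem _ hx)))
  · intro _ y hy
    simp at hy
    subst hy
    exact fun e => hp₁ (e ▸ hx)

lemma excise {v : ℕ} {S : Finset ℕ} (hS : ∀ a ∈ S, T.neighborSet a = {v}) (hv : v ∉ S) :
    ∀ {u w : ℕ}, T.ReachableWithin ↑T.verts u w → w ∉ S →
      Relation.ReflTransGen
        (fun a b => T.Adj a b ∧ a ∈ (↑T.verts \ ↑S : Set ℕ) ∧ b ∈ (↑T.verts \ ↑S : Set ℕ))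
        (if u ∈ S then v else u) w := by
  intro u w hwalk hwS
  induction hwalk using Relation.ReflTransGen.head_induction_on with
  | refl => rw [if_neg hwS]
  | head hstep hrest ih =>
    rename_i a c
    by_cases ha : a ∈ S
    · rw [if_pos ha]
      have hcv : c = v := by
        have h1 : c ∈ T.neighborSet a := hstep.1
        rw [hS a ha] at h1; exact h1
      rw [if_neg (hcv ▸ hv)] at ih
      exact hcv ▸ ih
    · rw [if_neg ha]
      by_cases hc : c ∈ S
      · have hav : a = v := by
          have h1 : a ∈ T.neighborSet c := T.symm a c hstep.1
          rw [hS c hc] at h1; exact h1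
        rw [if_pos hc] at ih
        exact hav ▸ ih
      · rw [if_neg hc] at ih
        exact Relation.ReflTransGen.head
          ⟨hstep.1, ⟨hstep.2.1, fun h => ha h⟩, ⟨hstep.2.2, fun h => hc h⟩⟩ ih

lemma removeVerts_tree {v : ℕ} {S : Finset ℕ} (hT : T.IsTreeGraph)
    (hS : ∀ a ∈ S, T.neighborSet a = {v}) (hvv : v ∈ T.verts) (hv : v ∉ S) :
    (T.removeVerts S).IsTreeGraph := by
  refine ⟨⟨v, Finset.mem_sdiff.mpr ⟨hvv, hv⟩⟩, ?_, ?_⟩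
  · intro u hu w hw
    simp only [removeVerts, Finset.coe_sdiff, Set.mem_diff, Finset.mem_coe] at hu hw
    have hwalk := hT.2.1 u hu.1 w hw.1
    have h := excise hS hv hwalk hw.2
    rw [if_neg hu.2] at h
    refine Relation.ReflTransGen.mono ?_ _ _ h
    rintro a b ⟨h1, ⟨h2a, h2b⟩, ⟨h3a, h3b⟩⟩
    exact ⟨⟨h1, h2b, h3b⟩, by simp [removeVerts, h2a, h2b, h3a, h3b], by simp [removeVerts, h2a, h2b, h3a, h3b]⟩
  · intro u w huw hwalk
    exact hT.2.2 u w huw.1 (Relation.ReflTransGen.mono (fun a b hab => ⟨hab.1.1, hab.2.1, hab.2.2⟩) _ _ hwalk)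

lemma removeVerts_nbhd {S : Finset ℕ} {x : ℕ} (hx : x ∉ S) :
    (T.removeVerts S).neighborSet x = T.neighborSet x \ ↑S := by
  ext y
  simp only [removeVerts, neighborSet, Set.mem_setOf_eq, Set.mem_diff, Finset.mem_coe]
  tauto

lemma removeVerts_deg_other {S : Finset ℕ} {v x : ℕ}
    (hS : ∀ a ∈ S, T.neighborSet a = {v}) (hx : x ∉ S) (hxv : x ≠ v) :
    (T.removeVerts S).degree x = T.degree x := by
  unfold degree
  rw [removeVerts_nbhd hx]
  congr 1
  apply Set.eq_of_subset_of_subset Set.diff_subset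
  intro y hy
  refine ⟨hy, fun hyS => ?_⟩
  rw [Finset.mem_coe] at hyS
  have h2 : x ∈ T.neighborSet y := T.symm x y hy
  rw [hS y hyS] at h2
  exact hxv h2

lemma removeVerts_deg_v {S : Finset ℕ} {v : ℕ}
    (hS : ∀ a ∈ S, T.neighborSet a = {v}) (hv : v ∉ S) :
    (T.removeVerts S).degree v = T.degree v - S.card := by
  unfold degree
  have hsub' : (↑S : Set ℕ) ⊆ T.neighborSet v := by
    intro a haS
    rw [Finset.mem_coe] at haS
    have h1 : v ∈ T.neighborSet a := by rw [hS a haS]; rfl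
    exact T.symm a v h1
  rw [removeVerts_nbhd hv, Set.ncard_diff hsub' S.finite_toSet, Set.ncard_coe_finset]

lemma deg_le (hv : v ∈ T.verts) : T.degree v ≤ T.verts.card - 1 := by
  have hsub : T.neighborSet v ⊆ ↑T.verts \ {v} := fun y hy =>
    ⟨(T.support v y hy).2, fun e => T.loopless v (Set.mem_singleton_iff.mp e ▸ hy)⟩
  have := Set.ncard_le_ncard hsub (T.verts.finite_toSet.diff)
  rwa [Set.ncard_diff_singleton_of_mem (s := (↑T.verts : Set ℕ)) (Finset.mem_coe.mpr hv), Set.ncard_coe_finset] at this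

lemma star_of (hT : T.IsTreeGraph) (h4 : T.verts.card = 4) {v : ℕ} (hv : v ∈ T.verts)
    (hd : T.degree v = 3) : T.IsStar13 := by
  have hsub : T.neighborSet v ⊆ ↑T.verts \ {v} := fun y hy =>
    ⟨(T.support v y hy).2, fun e => T.loopless v (Set.mem_singleton_iff.mp e ▸ hy)⟩
  have hfin : (↑T.verts \ {v} : Set ℕ).Finite := T.verts.finite_toSet.diff
  have hncard : (↑T.verts \ {v} : Set ℕ).ncard = 3 := by
    rw [Set.ncard_diff_singleton_of_mem (s := (↑T.verts : Set ℕ)) (Finset.mem_coe.mpr hv), Set.ncard_coe_finset, h4]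
  have heq : T.neighborSet v = ↑T.verts \ {v} :=
    Set.eq_of_subset_of_ncard_le hsub (by rw [hncard]; exact le_of_eq hd.symm) hfin
  obtain ⟨x, y, z, hxy, hxz, hyz, hxyz⟩ := Set.ncard_eq_three.mp hd
  have hvx : v ≠ x := by
    intro e; have : x ∈ T.neighborSet v := by rw [hxyz]; simp
    exact T.loopless v (e ▸ this)
  have hvy : v ≠ y := by
    intro e; have : y ∈ T.neighborSet v := by rw [hxyz]; simp
    exact T.loopless v (e ▸ this)
  have hvz : v ≠ z := by
    intro e; have : z ∈ T.neighborSet v := by rw [hxyz]; simp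
    exact T.loopless v (e ▸ this)
  have hvset : (↑T.verts : Set ℕ) = {v, x, y, z} := by
    have h1 : (↑T.verts : Set ℕ) = insert v (↑T.verts \ {v}) := by
      rw [Set.insert_diff_singleton]
      exact (Set.insert_eq_self.mpr (Finset.mem_coe.mpr hv)).symm
    rw [h1, ← heq, hxyz]
  refine ⟨v, x, y, z, hvx, hvy, hvz, hxy, hxz, hyz, ?_, ?_⟩
  · apply Finset.coe_injective
    rw [hvset]
    simp
  · intro a b
    constructor
    · intro hab
      have haV : a ∈ (↑T.verts : Set ℕ) := (T.support a b hab).1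
      have hbV : b ∈ (↑T.verts : Set ℕ) := (T.support a b hab).2
      by_cases hav : a = v
      · subst hav
        left
        refine ⟨rfl, ?_⟩
        have : b ∈ T.neighborSet a := hab
        rw [hxyz] at this
        exact this
      · by_cases hbv : b = v
        · subst hbv
          right
          refine ⟨rfl, ?_⟩
          have : a ∈ T.neighborSet b := T.symm a b hab
          rw [hxyz] at this
          exact this
        · exfalso
          have hanb : a ∈ T.neighborSet v := by
            rw [heq]; exact ⟨haV, hav⟩
          have hbnb : b ∈ T.neighborSet v := by
            rw [heq]; exact ⟨hbV, hbv⟩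
          have hne : a ≠ b := ne_of_adj hab
          have hvb : v ≠ b := fun e => hbv e.symm
          have hva : v ≠ a := fun e => hav e.symm
          refine hT.2.2 a b hab ?_
          refine Relation.ReflTransGen.head
            ⟨T.symm v a hanb, fun h => hvb h.2, fun h => hne h.1⟩
            (Relation.ReflTransGen.single ⟨hbnb, fun h => hva h.1, fun h => hvb h.1⟩)
    · rintro (⟨rfl, hb⟩ | ⟨rfl, ha⟩)
      · have : b ∈ T.neighborSet a := by rw [hxyz]; exact hb
        exact this
      · have : a ∈ T.neighborSet b := by rw [hxyz]; exact ha
        exact T.symm b a this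

lemma struct (hT : T.IsTreeGraph) (h2 : 2 ≤ T.verts.card) :
    (∃ v ∈ T.verts, (∀ y, T.Adj v y → T.degree y = 1) ∧
      (↑T.verts : Set ℕ) = insert v (T.neighborSet v)) ∨
    (∃ v w, T.Adj v w ∧ 2 ≤ T.degree v ∧ ∀ y, T.Adj v y → y ≠ w → T.degree y = 1) := by
  classical
  set P : List ℕ → Prop := fun l => l ≠ [] ∧ l.Chain' T.Adj ∧ l.Nodup ∧ ∀ x ∈ l, x ∈ T.verts
    with hP
  obtain ⟨x₀, hx₀⟩ := hT.1
  have hPne : P [x₀] := ⟨by simp, List.isChain_singleton _, by simp, by simpa⟩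
  have hAne : {k | ∃ l, P l ∧ l.length = k}.Nonempty := ⟨1, [x₀], hPne, rfl⟩
  have hAbdd : BddAbove {k | ∃ l, P l ∧ l.length = k} := by
    refine ⟨T.verts.card, ?_⟩
    rintro k ⟨l, ⟨_, _, hnd, hmem⟩, rfl⟩
    calc l.length = l.toFinset.card := (List.toFinset_card_of_nodup hnd).symm
      _ ≤ T.verts.card := Finset.card_le_card (fun x hx => hmem x (List.mem_toFinset.mp hx))
  obtain ⟨l, hPl, hlen⟩ := Nat.sSup_mem hAne hAbdd
  have hmax : ∀ l', P l' → l'.length ≤ l.length := by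
    intro l' h
    rw [hlen]
    exact le_csSup hAbdd ⟨l', h, rfl⟩
  obtain ⟨hlne, hch, hnd, hmem⟩ := hPl
  rcases l with _ | ⟨c, l1⟩
  · exact absurd rfl hlne
  rcases l1 with _ | ⟨v, rest⟩
  · exfalso
    obtain ⟨y, hy⟩ := exists_adj_of_connected hT.2.1 h2 (hmem c (by simp))
    have hPy : P [y, c] := by
      refine ⟨by simp, ?_, ?_, ?_⟩
      · exact List.isChain_pair.mpr (T.symm c y hy)
      · simp [(ne_of_adj (T.symm c y hy))]
      · intro x hx
        rcases List.mem_cons.mp hx with h1 | h2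
        · exact h1 ▸ (T.support c y hy).2
        · simp at h2; exact h2 ▸ hmem c (by simp)
    have := hmax _ hPy
    simp only [List.length_cons, List.length_nil] at this
    omega
  · have hch2 : List.Chain T.Adj c (v :: rest) := hch
    have hAdjcv : T.Adj c v := (List.chain_cons.mp hch2).1
    have hnbc : T.neighborSet c = {v} := by
      apply Set.eq_of_subset_of_subset
      · intro y hy
        by_contra hyv0
        have hyv : y ≠ v := by simpa using hyv0
        by_cases hyl : y ∈ c :: v :: rest
        · have hyr : y ∈ rest := by
            rcases List.mem_cons.mp hyl with h1 | h2
            · exact absurd h1 (ne_of_adj hy).symm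
            rcases List.mem_cons.mp h2 with h3 | h4
            · exact absurd h3 hyv
            · exact h4
          exact no_chord hT hch2 hnd hyr hy
        · have hPy : P (y :: c :: v :: rest) := by
            refine ⟨by simp, ?_, ?_, ?_⟩
            · exact List.chain_cons.mpr ⟨T.symm c y hy, hch2⟩
            · exact List.nodup_cons.mpr ⟨hyl, hnd⟩
            · intro x hx
              rcases List.mem_cons.mp hx with h1 | h2
              · exact h1 ▸ (T.support c y hy).2
              · exact hmem x h2
          have := hmax _ hPy
          simp only [List.length_cons] at this
          omega
      · intro y hy
        rw [Set.mem_singleton_iff] at hy; subst hy; exact hAdjcv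
    have hleaf_out : ∀ y, T.Adj v y → y ∉ c :: v :: rest → T.neighborSet y = {v} := by
      intro y hvy hyl
      apply Set.eq_of_subset_of_subset
      · intro z hz
        by_contra hzv0
        have hzv : z ≠ v := by simpa using hzv0
        by_cases hzl : z ∈ c :: v :: rest
        · rcases List.mem_cons.mp hzl with h1 | h2
          · exfalso
            have hyc : y ∈ T.neighborSet c := by
              rw [← h1]
              exact T.symm y z hz
            rw [hnbc, Set.mem_singleton_iff] at hyc
            exact (ne_of_adj hvy) hyc.symm
          rcases List.mem_cons.mp h2 with h3 | h4
          · exact hzv h3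
          · have hchy : List.Chain T.Adj y (v :: rest) :=
              List.chain_cons.mpr ⟨T.symm v y hvy, (List.chain_cons.mp hch2).2⟩
            have hndy : (y :: v :: rest).Nodup := by
              refine List.nodup_cons.mpr ⟨?_, (List.nodup_cons.mp hnd).2⟩
              intro h
              exact hyl (List.mem_cons_of_mem _ h)
            exact no_chord hT hchy hndy h4 hz
        · have hPz : P (z :: y :: v :: rest) := by
            refine ⟨by simp, ?_, ?_, ?_⟩
            · exact List.chain_cons.mpr ⟨T.symm y z hz,
                List.chain_cons.mpr ⟨T.symm v y hvy, (List.chain_cons.mp hch2).2⟩⟩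
            · refine List.nodup_cons.mpr ⟨?_, List.nodup_cons.mpr ⟨?_, (List.nodup_cons.mp hnd).2⟩⟩
              · intro h
                rcases List.mem_cons.mp h with h1 | h2
                · exact (ne_of_adj hz) h1.symm
                · exact hzl (List.mem_cons_of_mem _ h2)
              · intro h
                exact hyl (List.mem_cons_of_mem _ h)
            · intro x hx
              rcases List.mem_cons.mp hx with h1 | h2
              · exact h1 ▸ (T.support y z hz).2
              rcases List.mem_cons.mp h2 with h3 | h4
              · exact h3 ▸ (T.support v y hvy).2
              · exact hmem x (List.mem_cons_of_mem _ h4)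
          have := hmax _ hPz
          simp only [List.length_cons] at this
          omega
      · intro z hz
        rw [Set.mem_singleton_iff] at hz
        rw [hz]
        exact T.symm v y hvy
    rcases rest with _ | ⟨w, rest'⟩
    · left
      have hvV : v ∈ T.verts := hmem v (by simp)
      refine ⟨v, hvV, ?_, ?_⟩
      · intro y hvy
        by_cases hyc : y = c
        · subst hyc
          show (T.neighborSet y).ncard = 1
          rw [hnbc]
          exact Set.ncard_singleton v
        · have hyl : y ∉ [c, v] := by
            intro h
            rcases List.mem_cons.mp h with h1 | h2
            · exact hyc h1
            · simp at h2; exact (ne_of_adj hvy).symm h2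
          show (T.neighborSet y).ncard = 1
          rw [hleaf_out y hvy hyl]
          exact Set.ncard_singleton v
      · apply Set.eq_of_subset_of_subset
        · intro u hu
          rw [Finset.mem_coe] at hu
          have hwalk := hT.2.1 v hvV u hu
          clear hu
          induction hwalk with
          | refl => exact Set.mem_insert _ _
          | tail hxy hstep ih =>
            rename_i x u'
            rcases Set.mem_insert_iff.mp ih with h1 | hxnb
            · subst h1
              exact Set.mem_insert_iff.mpr (Or.inr hstep.1)
            · have hnx : T.neighborSet x = {v} := by
                by_cases hxc : x = c
                · subst hxc; exact hnbc
                · refine hleaf_out x hxnb ?_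
                  intro h
                  rcases List.mem_cons.mp h with h1 | h2
                  · exact hxc h1
                  · simp at h2; exact ne_of_adj hxnb h2.symm
              have h2' : u' ∈ T.neighborSet x := hstep.1
              rw [hnx, Set.mem_singleton_iff] at h2'
              subst h2'
              exact Set.mem_insert _ _
        · intro u hu
          rcases Set.mem_insert_iff.mp hu with h1 | hnb
          · subst h1; exact Finset.mem_coe.mpr hvV
          · exact Finset.mem_coe.mpr (T.support v u hnb).2
    · right
      have hchvw : List.Chain T.Adj v (w :: rest') := (List.chain_cons.mp hch2).2
      have hAdjvw : T.Adj v w := (List.chain_cons.mp hchvw).1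
      refine ⟨v, w, hAdjvw, ?_, ?_⟩
      · have h1 : c ∈ T.neighborSet v := T.symm c v hAdjcv
        have h2' : w ∈ T.neighborSet v := hAdjvw
        have hcw : c ≠ w := by
          intro e
          have hmem2 : c ∈ v :: w :: rest' := by rw [e]; simp
          exact (List.nodup_cons.mp hnd).1 hmem2
        calc 2 = ({c, w} : Set ℕ).ncard := (Set.ncard_pair hcw).symm
          _ ≤ (T.neighborSet v).ncard := Set.ncard_le_ncard (by
              intro z hz
              rcases Set.mem_insert_iff.mp hz with rfl | hz2
              · exact h1
              · rw [Set.mem_singleton_iff] at hz2; subst hz2; exact h2') (nbhd_finite T v)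
      · intro y hvy hyw
        by_cases hyc : y = c
        · subst hyc
          show (T.neighborSet y).ncard = 1
          rw [hnbc]
          exact Set.ncard_singleton v
        · by_cases hyl : y ∈ c :: v :: w :: rest'
          · exfalso
            have hyr : y ∈ rest' := by
              rcases List.mem_cons.mp hyl with h1 | h2
              · exact absurd h1 hyc
              rcases List.mem_cons.mp h2 with h3 | h4
              · exact absurd h3.symm (ne_of_adj hvy)
              rcases List.mem_cons.mp h4 with h5 | h6
              · exact absurd h5 hyw
              · exact h6
            have hnd' : (v :: w :: rest').Nodup := (List.nodup_cons.mp hnd).2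
            exact no_chord hT hchvw hnd' hyr hvy
          · show (T.neighborSet y).ncard = 1
            rw [hleaf_out y hvy hyl]
            exact Set.ncard_singleton v

lemma five_contra (hT : T.IsTreeGraph) (hdeg2 : ∀ x ∈ T.verts, T.degree x ≠ 2)
    (h5 : T.verts.card = 5) {v w a b : ℕ} (hvw : T.Adj v w) (hva : T.Adj v a) (hvb : T.Adj v b)
    (hdv : T.degree v = 3) (hna : T.neighborSet a = {v}) (hnb : T.neighborSet b = {v})
    (haw : a ≠ w) (hbw : b ≠ w) (hab : a ≠ b) : False := by
  classical
  have hvV := mem_verts_of_adj hvw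
  have hwV := mem_verts_of_adj (T.symm v w hvw)
  have haV := mem_verts_of_adj (T.symm v a hva)
  have hbV := mem_verts_of_adj (T.symm v b hvb)
  have hvw' : v ≠ w := ne_of_adj hvw
  have hva' : v ≠ a := ne_of_adj hva
  have hvb' : v ≠ b := ne_of_adj hvb
  have hnv : T.neighborSet v = {w, a, b} := by
    refine (Set.eq_of_subset_of_ncard_le ?_ ?_ (nbhd_finite T v)).symm
    · intro z hz
      rcases Set.mem_insert_iff.mp hz with rfl | hz2
      · exact hvw
      rcases Set.mem_insert_iff.mp hz2 with rfl | hz3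
      · exact hva
      · rw [Set.mem_singleton_iff] at hz3; subst hz3; exact hvb
    · have h3 : ({w, a, b} : Set ℕ).ncard = 3 :=
        Set.ncard_eq_three.mpr ⟨w, a, b, Ne.symm haw, Ne.symm hbw, hab, rfl⟩
      rw [show (T.neighborSet v).ncard = T.degree v from rfl, hdv, h3]
  set F : Finset ℕ := {v, w, a, b} with hF
  have hFcard : F.card = 4 := by
    rw [hF, Finset.card_insert_of_notMem (by simp [hvw', hva', hvb']),
        Finset.card_insert_of_notMem (by simp [Ne.symm haw, Ne.symm hbw]),
        Finset.card_insert_of_notMem (by simp [hab]), Finset.card_singleton]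
  have hFsub : F ⊆ T.verts := by
    intro x hx
    rw [hF] at hx
    simp only [Finset.mem_insert, Finset.mem_singleton] at hx
    rcases hx with rfl | rfl | rfl | rfl
    exacts [hvV, hwV, haV, hbV]
  obtain ⟨u, hu⟩ : (T.verts \ F).Nonempty := by
    rw [← Finset.card_pos, Finset.card_sdiff_of_subset hFsub, h5, hFcard]
    norm_num
  rw [Finset.mem_sdiff] at hu
  obtain ⟨huV, huF⟩ := hu
  have huv : u ≠ v := fun e => huF (by rw [e, hF]; simp)
  have huw : u ≠ w := fun e => huF (by rw [e, hF]; simp)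
  have hua : u ≠ a := fun e => huF (by rw [e, hF]; simp)
  have hub : u ≠ b := fun e => huF (by rw [e, hF]; simp)
  have hvertseq : T.verts = insert u F := by
    refine (Finset.eq_of_subset_of_card_le ?_ ?_).symm
    · intro x hx
      rcases Finset.mem_insert.mp hx with rfl | hx2
      · exact huV
      · exact hFsub hx2
    · rw [Finset.card_insert_of_notMem huF, hFcard, h5]
  have hnu_sub : T.neighborSet u ⊆ {w} := by
    intro z hz
    have hzV : z ∈ T.verts := (T.support u z hz).2
    rw [hvertseq, hF] at hzV
    simp only [Finset.mem_insert, Finset.mem_singleton] at hzV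
    rcases hzV with h | h | h | h | h <;> rw [h] at hz ⊢
    · exact absurd hz (T.loopless u)
    · exfalso
      have h1 : u ∈ T.neighborSet v := T.symm u v hz
      rw [hnv] at h1
      rcases Set.mem_insert_iff.mp h1 with e | h2
      · exact huw e
      rcases Set.mem_insert_iff.mp h2 with e | h3
      · exact hua e
      · exact hub (Set.mem_singleton_iff.mp h3)
    · rfl
    · exfalso
      have h1 : u ∈ T.neighborSet a := T.symm u a hz
      rw [hna] at h1
      exact huv (Set.mem_singleton_iff.mp h1)
    · exfalso
      have h1 : u ∈ T.neighborSet b := T.symm u b hz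
      rw [hnb] at h1
      exact huv (Set.mem_singleton_iff.mp h1)
  have hadjuw : T.Adj u w := by
    obtain ⟨y, hy⟩ := exists_adj_of_connected hT.2.1 (by omega) huV
    have h1 := hnu_sub hy
    rw [Set.mem_singleton_iff] at h1
    exact h1 ▸ hy
  have hnw : T.neighborSet w = {v, u} := by
    apply Set.eq_of_subset_of_subset
    · intro z hz
      have hzV : z ∈ T.verts := (T.support w z hz).2
      rw [hvertseq, hF] at hzV
      simp only [Finset.mem_insert, Finset.mem_singleton] at hzV
      rcases hzV with h | h | h | h | h <;> rw [h] at hz ⊢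
      · exact Set.mem_insert_iff.mpr (Or.inr rfl)
      · exact Set.mem_insert _ _
      · exact absurd hz (T.loopless w)
      · exfalso
        have h1 : w ∈ T.neighborSet a := T.symm w a hz
        rw [hna] at h1
        exact hvw' (Set.mem_singleton_iff.mp h1).symm
      · exfalso
        have h1 : w ∈ T.neighborSet b := T.symm w b hz
        rw [hnb] at h1
        exact hvw' (Set.mem_singleton_iff.mp h1).symm
    · intro z hz
      rcases Set.mem_insert_iff.mp hz with h | hz2
      · rw [h]
        exact T.symm v w hvw
      · rw [Set.mem_singleton_iff] at hz2
        rw [hz2]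
        exact T.symm u w hadjuw
  have hdw : T.degree w = 2 := by
    show (T.neighborSet w).ncard = 2
    rw [hnw]
    exact Set.ncard_pair (Ne.symm huv)
  exact hdeg2 w hwV hdw

end FinGraph

theorem tree_reduces_to_star (T : FinGraph) (hT : FinGraph.IsTreeGraph T)
    (hcard : 4 ≤ T.verts.card) (hdeg : ∀ v ∈ T.verts, T.degree v ≠ 2) :
    ∃ S, Relation.ReflTransGen FinGraph.LeafStep T S ∧ FinGraph.IsStar13 S := by
  suffices H : ∀ n (T : FinGraph), T.verts.card = n → T.IsTreeGraph →
      4 ≤ T.verts.card → (∀ v ∈ T.verts, T.degree v ≠ 2) →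
      ∃ S, Relation.ReflTransGen FinGraph.LeafStep T S ∧ FinGraph.IsStar13 S by
    exact H _ T rfl hT hcard hdeg
  intro n
  induction n using Nat.strong_induction_on with
  | _ n ih =>
  intro T hn hT h4 hdeg
  rcases FinGraph.struct hT (by omega) with ⟨v, hv, hleaves, hverts⟩ | ⟨v, w, hvw, hdv2, hleaves⟩
  · -- star-shaped tree
    have hvnb : v ∉ T.neighborSet v := fun h => T.loopless v h
    have hnbeq : T.neighborSet v = ↑T.verts \ {v} := by
      rw [hverts, Set.insert_diff_self_of_notMem hvnb]
    have hdv : T.degree v = n - 1 := by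
      show (T.neighborSet v).ncard = n - 1
      rw [hnbeq, Set.ncard_diff_singleton_of_mem (Finset.mem_coe.mpr hv),
        Set.ncard_coe_finset, hn]
    by_cases h4' : n = 4
    · exact ⟨T, Relation.ReflTransGen.refl, FinGraph.star_of hT (by omega) hv (by rw [hdv]; omega)⟩
    · have hd4 : 3 < T.degree v := by rw [hdv]; omega
      have hne : (T.neighborSet v).Nonempty := by
        apply Set.nonempty_of_ncard_ne_zero
        show T.degree v ≠ 0
        omega
      obtain ⟨a, ha⟩ := hne
      have hda : T.degree a = 1 := hleaves a ha
      have hnba : T.neighborSet a = {v} := FinGraph.nbhd_eq_singleton hda (T.symm v a ha)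
      have hstep : FinGraph.LeafStep T (T.removeVerts {a}) :=
        Or.inr ⟨v, a, hd4, hda, ha, rfl⟩
      have haS : ∀ x ∈ ({a} : Finset ℕ), T.neighborSet x = {v} := by
        intro x hx; rw [Finset.mem_singleton] at hx; subst hx; exact hnba
      have hvS : v ∉ ({a} : Finset ℕ) := by
        rw [Finset.mem_singleton]; exact FinGraph.ne_of_adj ha
      have hT' := FinGraph.removeVerts_tree hT haS hv hvS
      have haV : a ∈ T.verts := FinGraph.mem_verts_of_adj (T.symm v a ha)
      have hcard' : (T.removeVerts {a}).verts.card = n - 1 := by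
        show (T.verts \ {a}).card = n - 1
        rw [Finset.card_sdiff_of_subset (by simpa using haV), Finset.card_singleton, hn]
      have hdeg' : ∀ x ∈ (T.removeVerts {a}).verts, (T.removeVerts {a}).degree x ≠ 2 := by
        intro x hx
        have hx' : x ∈ T.verts \ {a} := hx
        rw [Finset.mem_sdiff] at hx'
        rcases eq_or_ne x v with rfl | hxv
        · rw [FinGraph.removeVerts_deg_v haS hvS, Finset.card_singleton, hdv]
          omega
        · rw [FinGraph.removeVerts_deg_other haS hx'.2 hxv]
          exact hdeg x hx'.1
      obtain ⟨S, hS1, hS2⟩ := ih (n-1) (by omega) _ hcard' hT' (by rw [hcard']; omega) hdeg'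
      exact ⟨S, Relation.ReflTransGen.head hstep hS1, hS2⟩
  · -- branch vertex v with exceptional neighbor w
    have hvV : v ∈ T.verts := FinGraph.mem_verts_of_adj hvw
    have hdv3 : 3 ≤ T.degree v := by
      have := hdeg v hvV; omega
    have hwnb : w ∈ T.neighborSet v := hvw
    by_cases hdeq : T.degree v = 3
    · have h2' : (T.neighborSet v \ {w}).ncard = 2 := by
        rw [Set.ncard_diff_singleton_of_mem hwnb]
        rw [show (T.neighborSet v).ncard = T.degree v from rfl, hdeq]
      obtain ⟨a, b, hab, habeq⟩ := Set.ncard_eq_two.mp h2'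
      have ha : T.Adj v a ∧ a ≠ w := by
        have h1 : a ∈ T.neighborSet v \ {w} := by rw [habeq]; exact Set.mem_insert _ _
        exact ⟨h1.1, fun e => h1.2 (Set.mem_singleton_iff.mpr e)⟩
      have hb : T.Adj v b ∧ b ≠ w := by
        have h1 : b ∈ T.neighborSet v \ {w} := by
          rw [habeq]; exact Set.mem_insert_iff.mpr (Or.inr rfl)
        exact ⟨h1.1, fun e => h1.2 (Set.mem_singleton_iff.mpr e)⟩
      have hda : T.degree a = 1 := hleaves a ha.1 ha.2
      have hdb : T.degree b = 1 := hleaves b hb.1 hb.2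
      have hnba : T.neighborSet a = {v} := FinGraph.nbhd_eq_singleton hda (T.symm v a ha.1)
      have hnbb : T.neighborSet b = {v} := FinGraph.nbhd_eq_singleton hdb (T.symm v b hb.1)
      by_cases h4' : n = 4
      · exact ⟨T, Relation.ReflTransGen.refl, FinGraph.star_of hT (by omega) hvV hdeq⟩
      by_cases h5' : n = 5
      · exact (FinGraph.five_contra hT hdeg (by omega) hvw ha.1 hb.1 hdeq hnba hnbb
          ha.2 hb.2 hab).elim
      · have hstep : FinGraph.LeafStep T (T.removeVerts {a, b}) :=
          Or.inl ⟨v, a, b, hdeq, hda, hdb, hab, ha.1, hb.1, rfl⟩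
        have haS : ∀ x ∈ ({a, b} : Finset ℕ), T.neighborSet x = {v} := by
          intro x hx
          rcases Finset.mem_insert.mp hx with rfl | hx2
          · exact hnba
          · rw [Finset.mem_singleton] at hx2; subst hx2; exact hnbb
        have hvS : v ∉ ({a, b} : Finset ℕ) := by
          simp only [Finset.mem_insert, Finset.mem_singleton]
          push_neg
          exact ⟨FinGraph.ne_of_adj ha.1, FinGraph.ne_of_adj hb.1⟩
        have hT' := FinGraph.removeVerts_tree hT haS hvV hvS
        have hsub : ({a, b} : Finset ℕ) ⊆ T.verts := by
          intro x hx
          rcases Finset.mem_insert.mp hx with h | hx2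
          · rw [h]
            exact FinGraph.mem_verts_of_adj (T.symm v a ha.1)
          · rw [Finset.mem_singleton] at hx2
            rw [hx2]
            exact FinGraph.mem_verts_of_adj (T.symm v b hb.1)
        have hcard2 : ({a, b} : Finset ℕ).card = 2 := by
          rw [Finset.card_insert_of_notMem (by simpa using hab), Finset.card_singleton]
        have hcard' : (T.removeVerts {a, b}).verts.card = n - 2 := by
          show (T.verts \ {a, b}).card = n - 2
          rw [Finset.card_sdiff_of_subset hsub, hcard2, hn]
        have hdeg' : ∀ x ∈ (T.removeVerts {a, b}).verts,
            (T.removeVerts {a, b}).degree x ≠ 2 := by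
          intro x hx
          have hx' : x ∈ T.verts \ ({a, b} : Finset ℕ) := hx
          rw [Finset.mem_sdiff] at hx'
          rcases eq_or_ne x v with rfl | hxv
          · rw [FinGraph.removeVerts_deg_v haS hvS, hcard2, hdeq]
            omega
          · rw [FinGraph.removeVerts_deg_other haS hx'.2 hxv]
            exact hdeg x hx'.1
        obtain ⟨S, hS1, hS2⟩ := ih (n-2) (by omega) _ hcard' hT' (by rw [hcard']; omega) hdeg'
        exact ⟨S, Relation.ReflTransGen.head hstep hS1, hS2⟩
    · have hd4 : 3 < T.degree v := by omega
      have hdle := FinGraph.deg_le hvV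
      have hd5 : 5 ≤ n := by omega
      have hne : (T.neighborSet v \ {w}).Nonempty := by
        apply Set.nonempty_of_ncard_ne_zero
        rw [Set.ncard_diff_singleton_of_mem hwnb]
        have h1 : 4 ≤ (T.neighborSet v).ncard := hd4
        omega
      obtain ⟨a, ha0⟩ := hne
      have ha : T.Adj v a := ha0.1
      have haw : a ≠ w := fun e => ha0.2 (Set.mem_singleton_iff.mpr e)
      have hda : T.degree a = 1 := hleaves a ha haw
      have hnba : T.neighborSet a = {v} := FinGraph.nbhd_eq_singleton hda (T.symm v a ha)
      have hstep : FinGraph.LeafStep T (T.removeVerts {a}) :=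
        Or.inr ⟨v, a, hd4, hda, ha, rfl⟩
      have haS : ∀ x ∈ ({a} : Finset ℕ), T.neighborSet x = {v} := by
        intro x hx; rw [Finset.mem_singleton] at hx; subst hx; exact hnba
      have hvS : v ∉ ({a} : Finset ℕ) := by
        rw [Finset.mem_singleton]; exact FinGraph.ne_of_adj ha
      have hT' := FinGraph.removeVerts_tree hT haS hvV hvS
      have haV : a ∈ T.verts := FinGraph.mem_verts_of_adj (T.symm v a ha)
      have hcard' : (T.removeVerts {a}).verts.card = n - 1 := by
        show (T.verts \ {a}).card = n - 1
        rw [Finset.card_sdiff_of_subset (by simpa using haV), Finset.card_singleton, hn]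
      have hdeg' : ∀ x ∈ (T.removeVerts {a}).verts, (T.removeVerts {a}).degree x ≠ 2 := by
        intro x hx
        have hx' : x ∈ T.verts \ {a} := hx
        rw [Finset.mem_sdiff] at hx'
        rcases eq_or_ne x v with rfl | hxv
        · rw [FinGraph.removeVerts_deg_v haS hvS, Finset.card_singleton]
          omega
        · rw [FinGraph.removeVerts_deg_other haS hx'.2 hxv]
          exact hdeg x hx'.1
      obtain ⟨S, hS1, hS2⟩ := ih (n-1) (by omega) _ hcard' hT' (by rw [hcard']; omega) hdeg'
      exact ⟨S, Relation.ReflTransGen.head hstep hS1, hS2⟩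
end

section
/- Every D3-reducible graph is 3-vertex-connected. -/
namespace FinGraph

set_option maxHeartbeats 1000000

section Helpers

variable {G H : FinGraph}

lemma reach_mono {S T : Set ℕ} (hST : S ⊆ T) {u v : ℕ} (h : G.ReachableWithin S u v) :
    G.ReachableWithin T u v :=
  Relation.ReflTransGen.mono (fun a b hab => ⟨hab.1, hST hab.2.1, hST hab.2.2⟩) _ _ h

lemma reach_symm {S : Set ℕ} {u v : ℕ} (h : G.ReachableWithin S u v) :
    G.ReachableWithin S v u := by
  have hs : Symmetric fun a b => G.Adj a b ∧ a ∈ S ∧ b ∈ S :=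
    fun a b hab => ⟨G.symm a b hab.1, hab.2.2, hab.2.1⟩
  exact (@Relation.ReflTransGen.symmetric _ _ ⟨fun a b hab => hs hab⟩).symm _ _ h

lemma reach_single {S : Set ℕ} {u v : ℕ} (h : G.Adj u v) (hu : u ∈ S) (hv : v ∈ S) :
    G.ReachableWithin S u v :=
  Relation.ReflTransGen.single ⟨h, hu, hv⟩

lemma reach_lift {T S : Set ℕ} (f : ℕ → ℕ)
    (hstep : ∀ a b, H.Adj a b → a ∈ T → b ∈ T → G.ReachableWithin S (f a) (f b))
    {u v : ℕ} (h : H.ReachableWithin T u v) : G.ReachableWithin S (f u) (f v) := by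
  induction h with
  | refl => exact Relation.ReflTransGen.refl
  | tail h1 h2 ih => exact ih.trans (hstep _ _ h2.1 h2.2.1 h2.2.2)

lemma exists_fresh (hc : 3 < G.verts.card) (a b c : ℕ) :
    ∃ z ∈ G.verts, z ≠ a ∧ z ≠ b ∧ z ≠ c := by
  have hne : (G.verts \ {a, b, c}).Nonempty := by
    rw [Finset.sdiff_nonempty]
    intro hsub
    have h1 : G.verts.card ≤ ({a, b, c} : Finset ℕ).card := Finset.card_le_card hsub
    have h2 : ({a, b, c} : Finset ℕ).card ≤ 3 := by
      apply le_trans (Finset.card_insert_le _ _)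
      have := Finset.card_insert_le b ({c} : Finset ℕ)
      simp at this ⊢
      omega
    omega
  obtain ⟨z, hz⟩ := hne
  simp only [Finset.mem_sdiff, Finset.mem_insert, Finset.mem_singleton, not_or] at hz
  exact ⟨z, hz.1, hz.2.1, hz.2.2.1, hz.2.2.2⟩

lemma pigeon6 {p q r p' q' r' x y : ℕ}
    (hpq : p ≠ q) (hpr : p ≠ r) (hqr : q ≠ r)
    (h1 : p' ≠ q') (h2 : p' ≠ r') (h3 : q' ≠ r')
    (hpa : p' ≠ p) (hpb : p' ≠ q) (hpc : p' ≠ r)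
    (hqa : q' ≠ p) (hqb : q' ≠ q) (hqc : q' ≠ r)
    (hra : r' ≠ p) (hrb : r' ≠ q) (hrc : r' ≠ r)
    (hxy : x ≠ y)
    (ha : p = x ∨ p = y ∨ p' = x ∨ p' = y)
    (hb : q = x ∨ q = y ∨ q' = x ∨ q' = y)
    (hc : r = x ∨ r = y ∨ r' = x ∨ r' = y) : False := by
  rcases ha with h | h | h | h <;> rcases hb with g | g | g | g <;>
    rcases hc with f | f | f | f <;> subst h <;> subst g <;> simp_all

lemma master (hc : 3 < G.verts.card)
    (hconn : ∀ x y, x ∈ G.verts → y ∈ G.verts → x ≠ y →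
      G.ConnectedOn (↑G.verts \ {x, y})) : G.ThreeConnected := by
  refine ⟨hc, fun x y u hu v hv => ?_⟩
  simp only [Set.mem_diff, Finset.mem_coe, Set.mem_insert_iff, Set.mem_singleton_iff,
    not_or] at hu hv
  obtain ⟨huG, hux, huy⟩ := hu
  obtain ⟨hvG, hvx, hvy⟩ := hv
  have key : ∃ x0 y0, x0 ∈ G.verts ∧ y0 ∈ G.verts ∧ x0 ≠ y0 ∧
      u ≠ x0 ∧ u ≠ y0 ∧ v ≠ x0 ∧ v ≠ y0 ∧
      (∀ w, w ∈ G.verts → w ≠ x0 → w ≠ y0 → w ≠ x ∧ w ≠ y) := by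
    by_cases hx : x ∈ G.verts
    · by_cases hy : y ∈ G.verts
      · by_cases hxy : x = y
        · subst hxy
          obtain ⟨z, hzG, hz1, hz2, hz3⟩ := exists_fresh hc x u v
          exact ⟨x, z, hx, hzG, fun h => hz1 h.symm, hux, fun h => hz2 h.symm,
            hvx, fun h => hz3 h.symm, fun w _ hw1 _ => ⟨hw1, hw1⟩⟩
        · exact ⟨x, y, hx, hy, hxy, hux, huy, hvx, hvy,
            fun w _ hw1 hw2 => ⟨hw1, hw2⟩⟩
      · obtain ⟨z, hzG, hz1, hz2, hz3⟩ := exists_fresh hc x u v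
        exact ⟨x, z, hx, hzG, fun h => hz1 h.symm, hux, fun h => hz2 h.symm,
          hvx, fun h => hz3 h.symm,
          fun w hwG hw1 _ => ⟨hw1, fun h => hy (h ▸ hwG)⟩⟩
    · by_cases hy : y ∈ G.verts
      · obtain ⟨z, hzG, hz1, hz2, hz3⟩ := exists_fresh hc y u v
        exact ⟨y, z, hy, hzG, fun h => hz1 h.symm, huy, fun h => hz2 h.symm,
          hvy, fun h => hz3 h.symm,
          fun w hwG hw1 _ => ⟨fun h => hx (h ▸ hwG), hw1⟩⟩
      · obtain ⟨z1, hz1G, _, hz12, hz13⟩ := exists_fresh hc u u v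
        obtain ⟨z2, hz2G, hz21, hz22, hz23⟩ := exists_fresh hc z1 u v
        exact ⟨z1, z2, hz1G, hz2G, fun h => hz21 h.symm,
          fun h => hz12 h.symm, fun h => hz22 h.symm,
          fun h => hz13 h.symm, fun h => hz23 h.symm,
          fun w hwG _ _ => ⟨fun h => hx (h ▸ hwG), fun h => hy (h ▸ hwG)⟩⟩
  obtain ⟨x0, y0, hx0, hy0, hne, hux0, huy0, hvx0, hvy0, hcov⟩ := key
  have hwalk := hconn x0 y0 hx0 hy0 hne u ?_ v ?_
  · refine reach_mono ?_ hwalk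
    intro w hw
    simp only [Set.mem_diff, Finset.mem_coe, Set.mem_insert_iff, Set.mem_singleton_iff,
      not_or] at hw ⊢
    exact ⟨hw.1, hcov w hw.1 hw.2.1 hw.2.2⟩
  · simp only [Set.mem_diff, Finset.mem_coe, Set.mem_insert_iff, Set.mem_singleton_iff, not_or]
    exact ⟨huG, hux0, huy0⟩
  · simp only [Set.mem_diff, Finset.mem_coe, Set.mem_insert_iff, Set.mem_singleton_iff, not_or]
    exact ⟨hvG, hvx0, hvy0⟩

lemma isK4_threeConnected (h : G.IsK4) : G.ThreeConnected := by
  refine ⟨by rw [h.1]; omega, fun x y u hu v hv => ?_⟩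
  by_cases huv : u = v
  · subst huv; exact Relation.ReflTransGen.refl
  · exact reach_single (h.2 u hu.1 v hv.1 huv) hu hv

lemma d3a_rev (hD : G.D3a H) (h3 : H.ThreeConnected) : G.ThreeConnected := by
  obtain ⟨p, q, r, p', q', r', t, hcfg, htG, hverts, hadj⟩ := hD
  obtain ⟨-, -, -, hpq, hqr, hpr, hpp', hqq', hrr', hp'n, hq'n, hr'n, hp'q', hp'r', hq'r'⟩ := hcfg
  simp only [Set.mem_insert_iff, Set.mem_singleton_iff, not_or] at hp'n hq'n hr'n
  have hpG := (G.support _ _ hpq).1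
  have hqG := (G.support _ _ hpq).2
  have hrG := (G.support _ _ hqr).2
  have hp'G := (G.support _ _ hpp').2
  have hq'G := (G.support _ _ hqq').2
  have hr'G := (G.support _ _ hrr').2
  have hpqne : p ≠ q := fun h => G.loopless q (h ▸ hpq)
  have hqrne : q ≠ r := fun h => G.loopless r (h ▸ hqr)
  have hprne : p ≠ r := fun h => G.loopless r (h ▸ hpr)
  have htne : ∀ a, a ∈ G.verts → a ≠ t := fun a ha h => htG (h ▸ ha)
  have hHmem : ∀ a, a ∈ H.verts ↔ (a ∈ G.verts ∧ a ≠ p ∧ a ≠ q ∧ a ≠ r) ∨ a = t := by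
    intro a
    rw [hverts]
    simp only [Finset.mem_union, Finset.mem_sdiff, Finset.mem_insert, Finset.mem_singleton,
      not_or]
  have hsub3 : ({p, q, r} : Finset ℕ) ⊆ G.verts := by
    intro a ha
    simp only [Finset.mem_insert, Finset.mem_singleton] at ha
    rcases ha with rfl | rfl | rfl <;> assumption
  have hc3 : ({p, q, r} : Finset ℕ).card = 3 := by
    rw [Finset.card_insert_of_notMem (by simp [hpqne, hprne]),
        Finset.card_insert_of_notMem (by simp [hqrne]), Finset.card_singleton]
  have hcard : 3 < G.verts.card := by
    have h1 := Finset.card_sdiff_of_subset hsub3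
    have h2 : H.verts.card = (G.verts \ {p, q, r}).card + 1 := by
      rw [hverts, Finset.card_union_of_disjoint
        (Finset.disjoint_singleton_right.mpr (fun h => htG (Finset.mem_sdiff.mp h).1)),
        Finset.card_singleton]
    have h3' := h3.1
    have h4 := Finset.card_le_card hsub3
    omega
  refine master hcard ?_
  intro x y hxG hyG hxy
  have hSmem : ∀ a, a ∈ (↑G.verts \ {x, y} : Set ℕ) ↔ a ∈ G.verts ∧ a ≠ x ∧ a ≠ y := by
    intro a
    simp only [Set.mem_diff, Finset.mem_coe, Set.mem_insert_iff, Set.mem_singleton_iff, not_or]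
  have htriadj : ∀ a b, (a = p ∨ a = q ∨ a = r) → (b = p ∨ b = q ∨ b = r) → a ≠ b →
      G.Adj a b := by
    rintro a b (rfl | rfl | rfl) (rfl | rfl | rfl) hne
    · exact absurd rfl hne
    · exact hpq
    · exact hpr
    · exact G.symm _ _ hpq
    · exact absurd rfl hne
    · exact hqr
    · exact G.symm _ _ hpr
    · exact G.symm _ _ hqr
    · exact absurd rfl hne
  have htriG : ∀ a, (a = p ∨ a = q ∨ a = r) → a ∈ G.verts := by
    rintro a (rfl | rfl | rfl) <;> assumption
  have hbridge : ∃ c c', G.Adj c c' ∧ (c = p ∨ c = q ∨ c = r) ∧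
      (c' ≠ p ∧ c' ≠ q ∧ c' ≠ r) ∧ c ≠ x ∧ c ≠ y ∧ c' ≠ x ∧ c' ≠ y := by
    by_cases h1 : p ≠ x ∧ p ≠ y ∧ p' ≠ x ∧ p' ≠ y
    · exact ⟨p, p', hpp', Or.inl rfl, hp'n, h1.1, h1.2.1, h1.2.2.1, h1.2.2.2⟩
    · by_cases h2 : q ≠ x ∧ q ≠ y ∧ q' ≠ x ∧ q' ≠ y
      · exact ⟨q, q', hqq', Or.inr (Or.inl rfl), hq'n, h2.1, h2.2.1, h2.2.2.1, h2.2.2.2⟩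
      · by_cases h4 : r ≠ x ∧ r ≠ y ∧ r' ≠ x ∧ r' ≠ y
        · exact ⟨r, r', hrr', Or.inr (Or.inr rfl), hr'n, h4.1, h4.2.1, h4.2.2.1, h4.2.2.2⟩
        · exfalso
          simp only [not_and_or, not_not, ne_eq] at h1 h2 h4
          obtain ⟨hpa, hpb, hpc⟩ := hp'n
          obtain ⟨hqa, hqb, hqc⟩ := hq'n
          obtain ⟨hra, hrb, hrc⟩ := hr'n
          exact pigeon6 hpqne hprne hqrne hp'q' hp'r' hq'r' hpa hpb hpc hqa hqb hqc
            hra hrb hrc hxy h1 h2 h4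
  have hbulk : ∀ u v, u ∈ G.verts → u ≠ x → u ≠ y → (u ≠ p ∧ u ≠ q ∧ u ≠ r) →
      v ∈ G.verts → v ≠ x → v ≠ y → (v ≠ p ∧ v ≠ q ∧ v ≠ r) →
      G.ReachableWithin (↑G.verts \ {x, y}) u v := by
    by_cases hA : ¬(x = p ∨ x = q ∨ x = r) ∧ ¬(y = p ∨ y = q ∨ y = r)
    · -- neither removed vertex is a triangle vertex: lift walks through t
      simp only [not_or] at hA
      intro u v huG hux huy hutri hvG hvx hvy hvtri
      have hT := h3.2 x y
      have hfG : ∀ a, a ∈ G.verts → (if a = t then p else a) = a := by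
        intro a ha; simp [htne a ha]
      have hpS : p ∈ (↑G.verts \ {x, y} : Set ℕ) :=
        (hSmem p).mpr ⟨hpG, fun h => hA.1.1 h.symm, fun h => hA.2.1 h.symm⟩
      have hqS : q ∈ (↑G.verts \ {x, y} : Set ℕ) :=
        (hSmem q).mpr ⟨hqG, fun h => hA.1.2.1 h.symm, fun h => hA.2.2.1 h.symm⟩
      have hrS : r ∈ (↑G.verts \ {x, y} : Set ℕ) :=
        (hSmem r).mpr ⟨hrG, fun h => hA.1.2.2 h.symm, fun h => hA.2.2.2 h.symm⟩
      have hreachp : ∀ b, (b = p' ∨ b = q' ∨ b = r') → b ≠ x → b ≠ y →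
          G.ReachableWithin (↑G.verts \ {x, y}) p b := by
        rintro b (rfl | rfl | rfl) hbx hby
        · exact reach_single hpp' hpS ((hSmem _).mpr ⟨hp'G, hbx, hby⟩)
        · exact (reach_single hpq hpS hqS).trans
            (reach_single hqq' hqS ((hSmem _).mpr ⟨hq'G, hbx, hby⟩))
        · exact (reach_single hpr hpS hrS).trans
            (reach_single hrr' hrS ((hSmem _).mpr ⟨hr'G, hbx, hby⟩))
      have key : ∀ a b, H.Adj a b → a ∈ (↑H.verts \ {x, y} : Set ℕ) →
          b ∈ (↑H.verts \ {x, y} : Set ℕ) →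
          G.ReachableWithin (↑G.verts \ {x, y})
            (if a = t then p else a) (if b = t then p else b) := by
        intro a b hab ha hb
        have hax : a ≠ x ∧ a ≠ y := by
          have := ha.2
          simp only [Set.mem_insert_iff, Set.mem_singleton_iff, not_or] at this
          exact this
        have hbx : b ≠ x ∧ b ≠ y := by
          have := hb.2
          simp only [Set.mem_insert_iff, Set.mem_singleton_iff, not_or] at this
          exact this
        rcases (hadj a b).1 hab with ⟨hGab, _, _⟩ | ⟨rfl, hb'⟩ | ⟨rfl, ha'⟩
        · have haG := (G.support _ _ hGab).1
          have hbG := (G.support _ _ hGab).2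
          rw [hfG a haG, hfG b hbG]
          exact reach_single hGab ((hSmem a).mpr ⟨haG, hax.1, hax.2⟩)
            ((hSmem b).mpr ⟨hbG, hbx.1, hbx.2⟩)
        · simp only [Set.mem_insert_iff, Set.mem_singleton_iff] at hb'
          have hbG : b ∈ G.verts := by rcases hb' with rfl | rfl | rfl <;> assumption
          rw [if_pos rfl, hfG b hbG]
          exact hreachp b hb' hbx.1 hbx.2
        · simp only [Set.mem_insert_iff, Set.mem_singleton_iff] at ha'
          have haG : a ∈ G.verts := by rcases ha' with rfl | rfl | rfl <;> assumption
          rw [if_pos rfl, hfG a haG]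
          exact reach_symm (hreachp a ha' hax.1 hax.2)
      have huT : u ∈ (↑H.verts \ {x, y} : Set ℕ) := by
        simp only [Set.mem_diff, Finset.mem_coe, Set.mem_insert_iff, Set.mem_singleton_iff,
          not_or]
        exact ⟨(hHmem u).mpr (Or.inl ⟨huG, hutri⟩), hux, huy⟩
      have hvT : v ∈ (↑H.verts \ {x, y} : Set ℕ) := by
        simp only [Set.mem_diff, Finset.mem_coe, Set.mem_insert_iff, Set.mem_singleton_iff,
          not_or]
        exact ⟨(hHmem v).mpr (Or.inl ⟨hvG, hvtri⟩), hvx, hvy⟩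
      have hlift := reach_lift (fun a => if a = t then p else a) key (hT u huT v hvT)
      rwa [hfG u huG, hfG v hvG] at hlift
    · -- some removed vertex is a triangle vertex: avoid t altogether
      intro u v huG hux huy hutri hvG hvx hvy hvtri
      simp only [not_and_or, not_not] at hA
      obtain ⟨z, hz1, hz2⟩ : ∃ z, (z = x ∨ z = y) ∧
          (∀ a, a ≠ p → a ≠ q → a ≠ r → a ≠ z → a ≠ x ∧ a ≠ y) := by
        rcases hA with hx' | hy'
        · exact ⟨y, Or.inr rfl, fun a h1 h2 h3 h4 =>
            ⟨by rcases hx' with rfl | rfl | rfl <;> assumption, h4⟩⟩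
        · exact ⟨x, Or.inl rfl, fun a h1 h2 h3 h4 =>
            ⟨h4, by rcases hy' with rfl | rfl | rfl <;> assumption⟩⟩
      have hT := h3.2 t z
      have key : ∀ a b, H.Adj a b → a ∈ (↑H.verts \ {t, z} : Set ℕ) →
          b ∈ (↑H.verts \ {t, z} : Set ℕ) →
          G.ReachableWithin (↑G.verts \ {x, y}) (id a) (id b) := by
        intro a b hab ha hb
        have hat : a ≠ t ∧ a ≠ z := by
          have := ha.2
          simp only [Set.mem_insert_iff, Set.mem_singleton_iff, not_or] at this
          exact this
        have hbt : b ≠ t ∧ b ≠ z := by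
          have := hb.2
          simp only [Set.mem_insert_iff, Set.mem_singleton_iff, not_or] at this
          exact this
        rcases (hadj a b).1 hab with ⟨hGab, han, hbn⟩ | ⟨rfl, _⟩ | ⟨rfl, _⟩
        · simp only [Set.mem_insert_iff, Set.mem_singleton_iff, not_or] at han hbn
          have haG := (G.support _ _ hGab).1
          have hbG := (G.support _ _ hGab).2
          have haxy := hz2 a han.1 han.2.1 han.2.2 hat.2
          have hbxy := hz2 b hbn.1 hbn.2.1 hbn.2.2 hbt.2
          exact reach_single hGab ((hSmem a).mpr ⟨haG, haxy.1, haxy.2⟩)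
            ((hSmem b).mpr ⟨hbG, hbxy.1, hbxy.2⟩)
        · exact absurd rfl hat.1
        · exact absurd rfl hbt.1
      have huz : u ≠ z := by rcases hz1 with rfl | rfl; exacts [hux, huy]
      have hvz : v ≠ z := by rcases hz1 with rfl | rfl; exacts [hvx, hvy]
      have huT : u ∈ (↑H.verts \ {t, z} : Set ℕ) := by
        simp only [Set.mem_diff, Finset.mem_coe, Set.mem_insert_iff, Set.mem_singleton_iff,
          not_or]
        exact ⟨(hHmem u).mpr (Or.inl ⟨huG, hutri⟩), htne u huG, huz⟩
      have hvT : v ∈ (↑H.verts \ {t, z} : Set ℕ) := by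
        simp only [Set.mem_diff, Finset.mem_coe, Set.mem_insert_iff, Set.mem_singleton_iff,
          not_or]
        exact ⟨(hHmem v).mpr (Or.inl ⟨hvG, hvtri⟩), htne v hvG, hvz⟩
      exact reach_lift id key (hT u huT v hvT)
  obtain ⟨c, c', hcc', hctri, hc'ntri, hcx, hcy, hc'x, hc'y⟩ := hbridge
  have hc'G := (G.support _ _ hcc').2
  have hcG := htriG c hctri
  have hcS : c ∈ (↑G.verts \ {x, y} : Set ℕ) := (hSmem c).mpr ⟨hcG, hcx, hcy⟩
  have hc'S : c' ∈ (↑G.verts \ {x, y} : Set ℕ) := (hSmem c').mpr ⟨hc'G, hc'x, hc'y⟩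
  have hanchor : ∀ w, w ∈ (↑G.verts \ {x, y} : Set ℕ) →
      G.ReachableWithin (↑G.verts \ {x, y}) w c' := by
    intro w hw
    obtain ⟨hwG, hwx, hwy⟩ := (hSmem w).mp hw
    by_cases hwtri : w = p ∨ w = q ∨ w = r
    · have h1 : G.ReachableWithin (↑G.verts \ {x, y}) w c := by
        by_cases hwc : w = c
        · subst hwc; exact Relation.ReflTransGen.refl
        · exact reach_single (htriadj w c hwtri hctri hwc) hw hcS
      exact h1.trans (reach_single hcc' hcS hc'S)
    · simp only [not_or] at hwtri
      exact hbulk w c' hwG hwx hwy hwtri hc'G hc'x hc'y hc'ntri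
  intro u hu v hv
  exact (hanchor u hu).trans (reach_symm (hanchor v hv))

lemma d3b_rev (hD : G.D3b H) (h3 : H.ThreeConnected) : G.ThreeConnected := by
  obtain ⟨p, q, r, s, hcfg, hverts, hadj⟩ := hD
  obtain ⟨hdp, -, -, hpq, hqr, hnpr, hprne, hsp, hsq, hsr⟩ := hcfg
  have hpG := (G.support _ _ hpq).1
  have hqG := (G.support _ _ hpq).2
  have hrG := (G.support _ _ hqr).2
  have hsG := (G.support _ _ hsp).1
  have hpqne : p ≠ q := fun h => G.loopless q (h ▸ hpq)
  have hqrne : q ≠ r := fun h => G.loopless r (h ▸ hqr)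
  have hspne : s ≠ p := fun h => G.loopless p (h ▸ hsp)
  have hsqne : s ≠ q := fun h => G.loopless q (h ▸ hsq)
  have hsrne : s ≠ r := fun h => G.loopless r (h ▸ hsr)
  have hHmem : ∀ a, a ∈ H.verts ↔ a ∈ G.verts ∧ a ≠ q := by
    intro a
    rw [hverts]
    simp [Finset.mem_sdiff]
  have hcard : 3 < G.verts.card := by
    have h2 : H.verts.card = G.verts.card - 1 := by
      rw [hverts, Finset.card_sdiff_of_subset (Finset.singleton_subset_iff.mpr hqG),
        Finset.card_singleton]
    have h3' := h3.1
    have h5 : 0 < G.verts.card := Finset.card_pos.mpr ⟨q, hqG⟩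
    omega
  refine master hcard ?_
  intro x y hxG hyG hxy
  have hSmem : ∀ a, a ∈ (↑G.verts \ {x, y} : Set ℕ) ↔ a ∈ G.verts ∧ a ≠ x ∧ a ≠ y := by
    intro a
    simp only [Set.mem_diff, Finset.mem_coe, Set.mem_insert_iff, Set.mem_singleton_iff, not_or]
  by_cases hq : q ≠ x ∧ q ≠ y
  · -- the deleted vertex q is not removed: lift H-walks, replacing edge pr by p-q-r
    have hT := h3.2 x y
    have hqS : q ∈ (↑G.verts \ {x, y} : Set ℕ) := (hSmem q).mpr ⟨hqG, hq.1, hq.2⟩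
    have key : ∀ a b, H.Adj a b → a ∈ (↑H.verts \ {x, y} : Set ℕ) →
        b ∈ (↑H.verts \ {x, y} : Set ℕ) →
        G.ReachableWithin (↑G.verts \ {x, y}) (id a) (id b) := by
      intro a b hab ha hb
      have hax : a ≠ x ∧ a ≠ y := by
        have := ha.2
        simp only [Set.mem_insert_iff, Set.mem_singleton_iff, not_or] at this
        exact this
      have hbx : b ≠ x ∧ b ≠ y := by
        have := hb.2
        simp only [Set.mem_insert_iff, Set.mem_singleton_iff, not_or] at this
        exact this
      have haG := ((hHmem a).mp (Finset.mem_coe.mp ha.1)).1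
      have hbG := ((hHmem b).mp (Finset.mem_coe.mp hb.1)).1
      have haS : a ∈ (↑G.verts \ {x, y} : Set ℕ) := (hSmem a).mpr ⟨haG, hax.1, hax.2⟩
      have hbS : b ∈ (↑G.verts \ {x, y} : Set ℕ) := (hSmem b).mpr ⟨hbG, hbx.1, hbx.2⟩
      rcases (hadj a b).1 hab with ⟨hGab, -, -⟩ | ⟨rfl, rfl⟩ | ⟨rfl, rfl⟩
      · exact reach_single hGab haS hbS
      · exact (reach_single hpq haS hqS).trans (reach_single hqr hqS hbS)
      · exact (reach_single (G.symm _ _ hqr) haS hqS).trans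
          (reach_single (G.symm _ _ hpq) hqS hbS)
    obtain ⟨w, hwadj, hwG, hwq, hwx, hwy⟩ :
        ∃ w, G.Adj q w ∧ w ∈ G.verts ∧ w ≠ q ∧ w ≠ x ∧ w ≠ y := by
      by_cases h1 : p ≠ x ∧ p ≠ y
      · exact ⟨p, G.symm _ _ hpq, hpG, hpqne, h1.1, h1.2⟩
      · by_cases h2 : r ≠ x ∧ r ≠ y
        · exact ⟨r, hqr, hrG, fun h => hqrne h.symm, h2.1, h2.2⟩
        · by_cases h4 : s ≠ x ∧ s ≠ y
          · exact ⟨s, G.symm _ _ hsq, hsG, hsqne, h4.1, h4.2⟩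
          · exfalso
            simp only [not_and_or, not_not, ne_eq] at h1 h2 h4
            rcases h1 with h | h <;> rcases h2 with g | g <;> rcases h4 with f | f <;>
              first
              | exact hprne (h.trans g.symm)
              | exact hspne (f.trans h.symm)
              | exact hsrne (f.trans g.symm)
    have hwS : w ∈ (↑G.verts \ {x, y} : Set ℕ) := (hSmem w).mpr ⟨hwG, hwx, hwy⟩
    have hwT : w ∈ (↑H.verts \ {x, y} : Set ℕ) := by
      simp only [Set.mem_diff, Finset.mem_coe, Set.mem_insert_iff, Set.mem_singleton_iff,
        not_or]
      exact ⟨(hHmem w).mpr ⟨hwG, hwq⟩, hwx, hwy⟩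
    have hanchor : ∀ u, u ∈ (↑G.verts \ {x, y} : Set ℕ) →
        G.ReachableWithin (↑G.verts \ {x, y}) u w := by
      intro u hu
      obtain ⟨huG, hux, huy⟩ := (hSmem u).mp hu
      by_cases huq : u = q
      · subst huq
        exact reach_single hwadj hu hwS
      · have huT : u ∈ (↑H.verts \ {x, y} : Set ℕ) := by
          simp only [Set.mem_diff, Finset.mem_coe, Set.mem_insert_iff, Set.mem_singleton_iff,
            not_or]
          exact ⟨(hHmem u).mpr ⟨huG, huq⟩, hux, huy⟩
        exact reach_lift id key (hT u huT w hwT)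
    intro u hu v hv
    exact (hanchor u hu).trans (reach_symm (hanchor v hv))
  · -- q is one of the removed vertices
    simp only [not_and_or, not_not, ne_eq] at hq
    have huq' : ∀ u, u ≠ x → u ≠ y → u ≠ q := by
      intro u h1 h2 e
      rcases hq with h | h
      · exact h1 (e.trans h)
      · exact h2 (e.trans h)
    obtain ⟨z, hzxy, hzq, hcov⟩ : ∃ z, (z = x ∨ z = y) ∧ z ≠ q ∧
        (∀ a, a ≠ q → a ≠ z → a ≠ x ∧ a ≠ y) := by
      rcases hq with h | h
      · exact ⟨y, Or.inr rfl, fun e => hxy (h.symm.trans e.symm),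
          fun a h1 h2 => ⟨fun e => h1 (e.trans h.symm), h2⟩⟩
      · exact ⟨x, Or.inl rfl, fun e => hxy (e.trans h),
          fun a h1 h2 => ⟨h2, fun e => h1 (e.trans h.symm)⟩⟩
    have hzu : ∀ u, u ≠ x → u ≠ y → u ≠ z := by
      intro u h1 h2
      rcases hzxy with rfl | rfl
      exacts [h1, h2]
    by_cases hzs : z = s
    · -- removed pair is {q, s}: attach p through its third neighbour
      have hT := h3.2 z p
      have key : ∀ a b, H.Adj a b → a ∈ (↑H.verts \ {z, p} : Set ℕ) →
          b ∈ (↑H.verts \ {z, p} : Set ℕ) →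
          G.ReachableWithin (↑G.verts \ {x, y}) (id a) (id b) := by
        intro a b hab ha hb
        have haz : a ≠ z ∧ a ≠ p := by
          have := ha.2
          simp only [Set.mem_insert_iff, Set.mem_singleton_iff, not_or] at this
          exact this
        have hbz : b ≠ z ∧ b ≠ p := by
          have := hb.2
          simp only [Set.mem_insert_iff, Set.mem_singleton_iff, not_or] at this
          exact this
        rcases (hadj a b).1 hab with ⟨hGab, haq, hbq⟩ | ⟨rfl, rfl⟩ | ⟨rfl, rfl⟩
        · have haG := (G.support _ _ hGab).1
          have hbG := (G.support _ _ hGab).2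
          have ha2 := hcov a haq haz.1
          have hb2 := hcov b hbq hbz.1
          exact reach_single hGab ((hSmem a).mpr ⟨haG, ha2.1, ha2.2⟩)
            ((hSmem b).mpr ⟨hbG, hb2.1, hb2.2⟩)
        · exact absurd rfl haz.2
        · exact absurd rfl hbz.2
      -- third neighbour of p
      have hNsub : G.neighborSet p ⊆ ↑G.verts := fun a ha => (G.support _ _ ha).2
      have hNfin : (G.neighborSet p).Finite := Set.Finite.subset G.verts.finite_toSet hNsub
      have hnsub : ¬ (G.neighborSet p ⊆ {q, s}) := by
        intro hsub
        have hle : (G.neighborSet p).ncard ≤ ({q, s} : Set ℕ).ncard :=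
          Set.ncard_le_ncard hsub (Set.Finite.insert _ (Set.finite_singleton _))
        have h2 : ({q, s} : Set ℕ).ncard ≤ 2 :=
          le_trans (Set.ncard_insert_le _ _) (by simp)
        have h3'' : (G.neighborSet p).ncard = 3 := hdp
        omega
      obtain ⟨a₀, ha₀N, ha₀ns⟩ := Set.not_subset.mp hnsub
      have ha₀adj : G.Adj p a₀ := ha₀N
      simp only [Set.mem_insert_iff, Set.mem_singleton_iff, not_or] at ha₀ns
      have ha₀G := (G.support _ _ ha₀adj).2
      have ha₀p : a₀ ≠ p := fun e => G.loopless p (e ▸ ha₀adj)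
      have ha₀z : a₀ ≠ z := fun e => ha₀ns.2 (e.trans hzs)
      have ha₀xy := hcov a₀ ha₀ns.1 ha₀z
      have ha₀S : a₀ ∈ (↑G.verts \ {x, y} : Set ℕ) :=
        (hSmem a₀).mpr ⟨ha₀G, ha₀xy.1, ha₀xy.2⟩
      have ha₀T : a₀ ∈ (↑H.verts \ {z, p} : Set ℕ) := by
        simp only [Set.mem_diff, Finset.mem_coe, Set.mem_insert_iff, Set.mem_singleton_iff,
          not_or]
        exact ⟨(hHmem a₀).mpr ⟨ha₀G, ha₀ns.1⟩, ha₀z, ha₀p⟩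
      have hpz : p ≠ z := fun e => hspne (e.trans hzs).symm
      have hpxy := hcov p hpqne hpz
      have hpS : p ∈ (↑G.verts \ {x, y} : Set ℕ) := (hSmem p).mpr ⟨hpG, hpxy.1, hpxy.2⟩
      have hanchor : ∀ u, u ∈ (↑G.verts \ {x, y} : Set ℕ) →
          G.ReachableWithin (↑G.verts \ {x, y}) u a₀ := by
        intro u hu
        obtain ⟨huG, hux, huy⟩ := (hSmem u).mp hu
        by_cases hup : u = p
        · subst hup
          exact reach_single ha₀adj hu ha₀S
        · have huT : u ∈ (↑H.verts \ {z, p} : Set ℕ) := by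
            simp only [Set.mem_diff, Finset.mem_coe, Set.mem_insert_iff,
              Set.mem_singleton_iff, not_or]
            exact ⟨(hHmem u).mpr ⟨huG, huq' u hux huy⟩, hzu u hux huy, hup⟩
          exact reach_lift id key (hT u huT a₀ ha₀T)
      intro u hu v hv
      exact (hanchor u hu).trans (reach_symm (hanchor v hv))
    · -- removed pair is {q, z} with z ≠ s: replace edge pr by p-s-r
      have hT := h3.2 z z
      have hsz : s ≠ z := fun e => hzs e.symm
      have hsxy := hcov s (fun e => hsqne e) hsz
      have hsS : s ∈ (↑G.verts \ {x, y} : Set ℕ) := (hSmem s).mpr ⟨hsG, hsxy.1, hsxy.2⟩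
      have key : ∀ a b, H.Adj a b → a ∈ (↑H.verts \ {z, z} : Set ℕ) →
          b ∈ (↑H.verts \ {z, z} : Set ℕ) →
          G.ReachableWithin (↑G.verts \ {x, y}) (id a) (id b) := by
        intro a b hab ha hb
        have haz : a ≠ z := by
          have := ha.2
          simp only [Set.mem_insert_iff, Set.mem_singleton_iff, not_or] at this
          exact this.1
        have hbz : b ≠ z := by
          have := hb.2
          simp only [Set.mem_insert_iff, Set.mem_singleton_iff, not_or] at this
          exact this.1
        have haq : a ≠ q := ((hHmem a).mp (Finset.mem_coe.mp ha.1)).2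
        have hbq : b ≠ q := ((hHmem b).mp (Finset.mem_coe.mp hb.1)).2
        have haG : a ∈ G.verts := ((hHmem a).mp (Finset.mem_coe.mp ha.1)).1
        have hbG : b ∈ G.verts := ((hHmem b).mp (Finset.mem_coe.mp hb.1)).1
        have ha2 := hcov a haq haz
        have hb2 := hcov b hbq hbz
        have haS : a ∈ (↑G.verts \ {x, y} : Set ℕ) := (hSmem a).mpr ⟨haG, ha2.1, ha2.2⟩
        have hbS : b ∈ (↑G.verts \ {x, y} : Set ℕ) := (hSmem b).mpr ⟨hbG, hb2.1, hb2.2⟩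
        rcases (hadj a b).1 hab with ⟨hGab, -, -⟩ | ⟨rfl, rfl⟩ | ⟨rfl, rfl⟩
        · exact reach_single hGab haS hbS
        · exact (reach_single (G.symm _ _ hsp) haS hsS).trans (reach_single hsr hsS hbS)
        · exact (reach_single (G.symm _ _ hsr) haS hsS).trans (reach_single hsp hsS hbS)
      intro u hu v hv
      obtain ⟨huG, hux, huy⟩ := (hSmem u).mp hu
      obtain ⟨hvG, hvx, hvy⟩ := (hSmem v).mp hv
      have huT : u ∈ (↑H.verts \ {z, z} : Set ℕ) := by
        simp only [Set.mem_diff, Finset.mem_coe, Set.mem_insert_iff, Set.mem_singleton_iff,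
          not_or]
        exact ⟨(hHmem u).mpr ⟨huG, huq' u hux huy⟩, hzu u hux huy, hzu u hux huy⟩
      have hvT : v ∈ (↑H.verts \ {z, z} : Set ℕ) := by
        simp only [Set.mem_diff, Finset.mem_coe, Set.mem_insert_iff, Set.mem_singleton_iff,
          not_or]
        exact ⟨(hHmem v).mpr ⟨hvG, huq' v hvx hvy⟩, hzu v hvx hvy, hzu v hvx hvy⟩
      exact reach_lift id key (hT u huT v hvT)

lemma step_rev (hD : G.D3Step H) (h3 : H.ThreeConnected) : G.ThreeConnected :=
  hD.elim (fun h => d3a_rev h h3) (fun h => d3b_rev h h3)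

end Helpers

end FinGraph

theorem d3_reducible_three_connected (G : FinGraph) (h : G.D3Reducible) :
    G.ThreeConnected := by
  obtain ⟨H, hsteps, hK4⟩ := h
  induction hsteps using Relation.ReflTransGen.head_induction_on with
  | refl => exact FinGraph.isK4_threeConnected hK4
  | head hstep _ ih => exact FinGraph.step_rev hstep ih
end
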